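/- Let (x̄₁, x̄₂, x̄₃, x̄₄, x̄₅) ∈ (ℝ₀⁺)⁵ be an equilibrium point, λ̄ = βx̄₅/(κ + x̄₅), C = βκx̄₁/(κ + x̄₅)², and let A₀ be the 5×5 real matrix with rows (−λ̄−μ, 0, 0, ω, −C), (0, −a₁, 0, 0, 0), (0, δ, −a₂, 0, 0), (0, 0, ε, −a₃, 0), (0, η, 0, 0, −d), and A₁ the 5×5 real matrix whose only nonzero entries are (A₁)₂₁ = λ̄ and (A₁)₂₅ = C. Then for every τ ≥ 0 and every χ ∈ ℂ, det(χI₅ − A₀ − e^{−τχ}A₁) = P₁(χ) + e^{−τχ}P₂(χ). -/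

import Mathlib

set_option maxHeartbeats 1000000


open Complex

/-- The characteristic determinant of the linearized delayed SIQRB system splits as
`det(χI₅ − A₀ − e^{−τχ}A₁) = P₁(χ) + e^{−τχ}P₂(χ)`. -/
theorem siqrb_characteristic_polynomial
    (Λ μ β κ η d ω δ ε α₁ α₂ : ℝ)
    (hΛ : 0 < Λ) (hμ : 0 < μ) (hβ : 0 < β) (hκ : 0 < κ) (hη : 0 < η) (hd : 0 < d)
    (hω : 0 ≤ ω) (hδ : 0 ≤ δ) (hε : 0 ≤ ε) (hα₁ : 0 ≤ α₁) (hα₂ : 0 ≤ α₂)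
    (x₁ x₂ x₃ x₄ x₅ : ℝ)
    (hx₁ : 0 ≤ x₁) (hx₂ : 0 ≤ x₂) (hx₃ : 0 ≤ x₃) (hx₄ : 0 ≤ x₄) (hx₅ : 0 ≤ x₅)
    (a₁ a₂ a₃ lam C : ℝ)
    (ha₁ : a₁ = δ + α₁ + μ) (ha₂ : a₂ = ε + α₂ + μ) (ha₃ : a₃ = ω + μ)
    (hlam : lam = β * x₅ / (κ + x₅)) (hC : C = β * κ * x₁ / (κ + x₅) ^ 2)
    (P₁ P₂ : ℂ → ℂ)
    (hP₁ : ∀ χ : ℂ, P₁ χ =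
      (χ + (a₁ : ℂ)) * (χ + (a₂ : ℂ)) * (χ + (a₃ : ℂ)) * (χ + (d : ℂ)) *
        (χ + (lam : ℂ) + (μ : ℂ)))
    (hP₂ : ∀ χ : ℂ, P₂ χ =
      -(η : ℂ) * (C : ℂ) * χ ^ 3 - (η : ℂ) * (C : ℂ) * ((a₂ : ℂ) + (a₃ : ℂ) + (μ : ℂ)) * χ ^ 2
        - ((η : ℂ) * (C : ℂ) * ((a₂ : ℂ) * (a₃ : ℂ) + (a₂ : ℂ) * (μ : ℂ) + (a₃ : ℂ) * (μ : ℂ))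
            + (δ : ℂ) * (ε : ℂ) * (ω : ℂ) * (lam : ℂ)) * χ
        - (η : ℂ) * (C : ℂ) * (a₂ : ℂ) * (a₃ : ℂ) * (μ : ℂ)
        - (δ : ℂ) * (ε : ℂ) * (ω : ℂ) * (d : ℂ) * (lam : ℂ))
    (A₀ A₁mat : Matrix (Fin 5) (Fin 5) ℂ)
    (hA₀ : A₀ = !![-(lam : ℂ) - (μ : ℂ), 0, 0, (ω : ℂ), -(C : ℂ);
                   0, -(a₁ : ℂ), 0, 0, 0;
                   0, (δ : ℂ), -(a₂ : ℂ), 0, 0;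
                   0, 0, (ε : ℂ), -(a₃ : ℂ), 0;
                   0, (η : ℂ), 0, 0, -(d : ℂ)])
    (hA₁ : A₁mat = !![0, 0, 0, 0, 0;
                      (lam : ℂ), 0, 0, 0, (C : ℂ);
                      0, 0, 0, 0, 0;
                      0, 0, 0, 0, 0;
                      0, 0, 0, 0, 0]) :
    ∀ (τ : ℝ), 0 ≤ τ → ∀ χ : ℂ,
      Matrix.det (χ • (1 : Matrix (Fin 5) (Fin 5) ℂ) - A₀ - Complex.exp (-(τ : ℂ) * χ) • A₁mat)
        = P₁ χ + Complex.exp (-(τ : ℂ) * χ) * P₂ χ := by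
  intro τ hτ χ
  rw [hP₁, hP₂]
  set E : ℂ := Complex.exp (-(τ : ℂ) * χ) with hE
  have hM : χ • (1 : Matrix (Fin 5) (Fin 5) ℂ) - A₀ - E • A₁mat =
      !![χ + (lam : ℂ) + (μ : ℂ), 0, 0, -(ω : ℂ), (C : ℂ);
         -E * (lam : ℂ), χ + (a₁ : ℂ), 0, 0, -E * (C : ℂ);
         0, -(δ : ℂ), χ + (a₂ : ℂ), 0, 0;
         0, 0, -(ε : ℂ), χ + (a₃ : ℂ), 0;
         0, -(η : ℂ), 0, 0, χ + (d : ℂ)] := by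
    subst hA₀ hA₁
    ext i j
    fin_cases i <;> fin_cases j <;>
      simp [Matrix.one_apply, Matrix.vecHead, Matrix.vecTail] <;> ring
  rw [hM]
  simp [Matrix.det_succ_row_zero, Fin.sum_univ_succ, Fin.succAbove, Fin.castSucc, Fin.castAdd,
    Fin.castLE, Matrix.vecHead, Matrix.vecTail]
  ring
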